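/- arXiv:1702.03787 — 2 statements merged into one kernel-verified Lean document; each statement's English description precedes it below -/
import Mathlib

section
/- The graph R_ω satisfies the extension property of the countable random graph: for all finite disjoint sets A, B of vertices of R_ω, there exists a vertex x ∉ A ∪ B such that x is adjacent in R_ω to every element of A and to no element of B. -/
/-- The adjacency relation of the graph `R_ω`: its vertices are the naturals `≥ 2`, and
distinct vertices `m, n` are adjacent iff `p_m ∣ n` or `p_n ∣ m`, where `(p_k)` is the
increasing enumeration of the primes. -/
def RomegaAdj (m n : ℕ) : Prop :=
  m ≠ n ∧ 2 ≤ m ∧ 2 ≤ n ∧ (Nat.nth Nat.Prime m ∣ n ∨ Nat.nth Nat.Prime n ∣ m)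

/-- **`R_ω` is a random graph.** For all finite disjoint sets `A, B` of vertices of `R_ω`
there is a vertex `x ∉ A ∪ B` adjacent to every element of `A` and to no element of
`B`. -/
theorem Romega_extension_property (A B : Finset ℕ)
    (hA : ∀ a ∈ A, 2 ≤ a) (hB : ∀ b ∈ B, 2 ≤ b) (hAB : Disjoint A B) :
    ∃ x : ℕ, 2 ≤ x ∧ x ∉ A ∧ x ∉ B ∧
      (∀ a ∈ A, RomegaAdj x a) ∧ ∀ b ∈ B, ¬ RomegaAdj x b := by
  have hinf := Nat.infinite_setOf_prime
  have hsm := Nat.nth_strictMono hinf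
  have hprime : ∀ n, Nat.Prime (Nat.nth Nat.Prime n) :=
    fun n => Nat.nth_mem_of_infinite hinf n
  set m := (A ∪ B).sup id with hm
  have hle : ∀ y ∈ A ∪ B, y ≤ m := fun y hy => Finset.le_sup (f := id) hy
  set P := ∏ a ∈ A, Nat.nth Nat.Prime a with hP
  have hP1 : 1 ≤ P := Finset.one_le_prod' fun a _ => (hprime a).one_lt.le
  set x := 2 ^ (m + 1) * P with hx
  have hmx : m < x := by
    calc m < 2 ^ (m + 1) := (Nat.lt_two_pow_self (n := m)).trans_le
            (Nat.pow_le_pow_right (by norm_num) (Nat.le_succ m))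
    _ ≤ x := Nat.le_mul_of_pos_right _ hP1
  have hx2 : 2 ≤ x := by
    calc 2 ≤ 2 ^ (m + 1) := Nat.le_self_pow (Nat.succ_ne_zero m) 2
    _ ≤ x := Nat.le_mul_of_pos_right _ hP1
  have hxA : x ∉ A := fun h => absurd (hle x (Finset.mem_union_left _ h)) hmx.not_ge
  have hxB : x ∉ B := fun h => absurd (hle x (Finset.mem_union_right _ h)) hmx.not_ge
  refine ⟨x, hx2, hxA, hxB, ?_, ?_⟩
  · intro a ha
    refine ⟨?_, hx2, hA a ha, Or.inr ?_⟩
    · exact fun h => absurd (h ▸ hle a (Finset.mem_union_left _ ha)) hmx.not_ge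
    · exact Dvd.dvd.mul_left (Finset.dvd_prod_of_mem _ ha) _
  · intro b hb ⟨_, _, _, hdvd⟩
    have hbm : b ≤ m := hle b (Finset.mem_union_right _ hb)
    rcases hdvd with h | h
    · have : x ≤ Nat.nth Nat.Prime x := hsm.le_apply
      have : Nat.nth Nat.Prime x ≤ b := Nat.le_of_dvd (by omega) h
      omega
    · rcases (Nat.Prime.dvd_mul (hprime b)).1 h with h2 | hp
      · have h2' : Nat.nth Nat.Prime b ∣ 2 := (hprime b).dvd_of_dvd_pow h2
        have heq : Nat.nth Nat.Prime b = 2 := ((Nat.prime_dvd_prime_iff_eq (hprime b) Nat.prime_two).1 h2')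
        have : b = 0 := Nat.nth_injective hinf (by rw [heq, Nat.nth_prime_zero_eq_two])
        have := hB b hb
        omega
      · obtain ⟨a, ha, hdvd'⟩ := (Nat.Prime.prime (hprime b)).exists_mem_finset_dvd hp
        have : Nat.nth Nat.Prime b = Nat.nth Nat.Prime a :=
          (Nat.prime_dvd_prime_iff_eq (hprime b) (hprime a)).1 hdvd'
        have hba : b = a := Nat.nth_injective hinf this
        exact (Finset.disjoint_left.1 hAB (hba ▸ ha) hb)
end

section
/- There is a continuous map assigning to each graph T ∈ X_Gr an injective function f_T : ℕ → ℕ \ {0, 1} such that for all m, n ∈ ℕ, m and n are adjacent in T if and only if f_T(m) and f_T(n) are adjacent in R_ω; in particular, the map X_Gr → 2^(ℕ \ {0,1}) sending T to the range of f_T is continuous, and the induced subgraph of R_ω on this range is isomorphic to T. -/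
/-- The Polish space of simple graphs on `ℕ`, coded as symmetric irreflexive
`{0,1}`-valued functions on `ℕ × ℕ`. -/
abbrev XGr := { A : ℕ × ℕ → Bool // (∀ a b, A (a, b) = A (b, a)) ∧ ∀ a, A (a, a) = false }

namespace RH

noncomputable def fA (A : ℕ × ℕ → Bool) : ℕ → ℕ
  | 0 => 2
  | n + 1 =>
      Nat.nth Nat.Prime (fA A n + 1) *
        ∏ m ∈ (Finset.range (n + 1)).attach,
          if A (m.1, n + 1) then Nat.nth Nat.Prime (fA A m.1) else 1
decreasing_by
  · omega
  · have := Finset.mem_range.mp m.2; omega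

lemma fA_succ (A : ℕ × ℕ → Bool) (n : ℕ) :
    fA A (n + 1) = Nat.nth Nat.Prime (fA A n + 1) *
      ∏ m ∈ Finset.range (n + 1), if A (m, n + 1) then Nat.nth Nat.Prime (fA A m) else 1 := by
  rw [fA, Finset.prod_attach (Finset.range (n+1))
    (fun m => if A (m, n + 1) then Nat.nth Nat.Prime (fA A m) else 1)]

end RH
namespace RH
lemma nthp_strictMono : StrictMono (Nat.nth Nat.Prime) :=
  Nat.nth_strictMono Nat.infinite_setOf_prime

lemma nthp_prime (n : ℕ) : (Nat.nth Nat.Prime n).Prime := Nat.prime_nth_prime n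

lemma le_nthp (n : ℕ) : n ≤ Nat.nth Nat.Prime n := nthp_strictMono.le_apply

lemma one_le_prod (A : ℕ × ℕ → Bool) (n : ℕ) :
    1 ≤ ∏ m ∈ Finset.range (n + 1), if A (m, n + 1) then Nat.nth Nat.Prime (fA A m) else 1 := by
  apply Finset.one_le_prod'
  intro i _
  split
  · exact (nthp_prime _).one_lt.le
  · exact le_refl 1

lemma two_le_fA (A : ℕ × ℕ → Bool) (n : ℕ) : 2 ≤ fA A n := by
  cases n with
  | zero => rw [fA]
  | succ n =>
    rw [fA_succ]
    calc 2 ≤ Nat.nth Nat.Prime (fA A n + 1) := (nthp_prime _).two_le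
    _ ≤ _ := Nat.le_mul_of_pos_right _ (one_le_prod A n)

lemma fA_lt_succ (A : ℕ × ℕ → Bool) (n : ℕ) : fA A n < fA A (n + 1) := by
  rw [fA_succ]
  calc fA A n < fA A n + 1 := Nat.lt_succ_self _
  _ ≤ Nat.nth Nat.Prime (fA A n + 1) := le_nthp _
  _ ≤ _ := Nat.le_mul_of_pos_right _ (one_le_prod A n)

lemma fA_strictMono (A : ℕ × ℕ → Bool) : StrictMono (fA A) :=
  strictMono_nat_of_lt_succ (fA_lt_succ A)
end RH
namespace RH
lemma fA_ge (A : ℕ × ℕ → Bool) (n : ℕ) : n + 2 ≤ fA A n := by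
  induction n with
  | zero => rw [fA]
  | succ n ih => have := fA_lt_succ A n; omega

lemma dvd_iff (A : ℕ × ℕ → Bool) {m n : ℕ} (h : m < n) :
    Nat.nth Nat.Prime (fA A m) ∣ fA A n ↔ A (m, n) = true := by
  obtain ⟨k, rfl⟩ : ∃ k, n = k + 1 := ⟨n - 1, by omega⟩
  have hm : m < k + 1 := h
  rw [fA_succ]
  constructor
  · intro hd
    rcases (nthp_prime (fA A m)).dvd_mul.mp hd with h1 | h2
    · exfalso
      have := (Nat.prime_dvd_prime_iff_eq (nthp_prime _) (nthp_prime _)).mp h1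
      have heq := nthp_strictMono.injective this
      have : fA A m ≤ fA A k := (fA_strictMono A).monotone (by omega)
      omega
    · obtain ⟨j, hj, hdj⟩ :=
        ((nthp_prime (fA A m)).prime).exists_mem_finset_dvd h2
      by_cases hA : A (j, k + 1) = true
      · rw [if_pos hA] at hdj
        have := (Nat.prime_dvd_prime_iff_eq (nthp_prime _) (nthp_prime _)).mp hdj
        have hjm : fA A m = fA A j := nthp_strictMono.injective this
        have : m = j := (fA_strictMono A).injective hjm
        rwa [this]
      · rw [if_neg hA] at hdj
        exact absurd (Nat.le_of_dvd one_pos hdj) (nthp_prime _).one_lt.not_ge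
  · intro hA
    have hmem : m ∈ Finset.range (k + 1) := Finset.mem_range.mpr hm
    have hd := Finset.dvd_prod_of_mem
      (fun j => if A (j, k + 1) then Nat.nth Nat.Prime (fA A j) else 1) hmem
    simp only [if_pos hA] at hd
    exact hd.mul_left _
end RH
namespace RH

lemma adj_lt (A : ℕ × ℕ → Bool) {m n : ℕ} (h : m < n) :
    RomegaAdj (fA A m) (fA A n) ↔ A (m, n) = true := by
  constructor
  · rintro ⟨hne, -, -, hor⟩
    rcases hor with h1 | h2
    · exact (dvd_iff A h).mp h1
    · exfalso
      have h0 : 0 < fA A m := by have := two_le_fA A m; omega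
      have hle := Nat.le_of_dvd h0 h2
      have := le_nthp (fA A n)
      have := fA_strictMono A h
      omega
  · intro hA
    exact ⟨(fA_strictMono A h).ne, two_le_fA A m, two_le_fA A n,
      Or.inl ((dvd_iff A h).mpr hA)⟩

lemma main_iff (T : XGr) (m n : ℕ) :
    T.1 (m, n) = true ↔ RomegaAdj (fA T.1 m) (fA T.1 n) := by
  rcases lt_trichotomy m n with h | rfl | h
  · exact (adj_lt T.1 h).symm
  · simp [T.2.2 m, RomegaAdj]
  · rw [T.2.1 m n, ← adj_lt T.1 h]
    constructor <;> (rintro ⟨a, b, c, d⟩; exact ⟨fun e => a e.symm, c, b, d.symm⟩)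

lemma cont_fA (n : ℕ) : Continuous (fun T : XGr => fA T.1 n) := by
  induction n using Nat.strong_induction_on with
  | _ n ih =>
    cases n with
    | zero =>
      have : (fun T : XGr => fA T.1 0) = fun _ => 2 := by
        funext T; rw [fA]
      rw [this]; exact continuous_const
    | succ n =>
      have hrep : (fun T : XGr => fA T.1 (n + 1)) =
          (fun v : Fin (n + 1) → ℕ × Bool =>
            Nat.nth Nat.Prime ((v ⟨n, n.lt_succ_self⟩).1 + 1) *
              ∏ m : Fin (n + 1), if (v m).2 then Nat.nth Nat.Prime ((v m).1) else 1) ∘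
          (fun T : XGr => fun m : Fin (n + 1) => (fA T.1 m.1, T.1 (m.1, n + 1))) := by
        funext T
        simp only [Function.comp]
        rw [fA_succ]
        congr 1
        exact (Fin.prod_univ_eq_prod_range
          (fun m => if T.1 (m, n + 1) then Nat.nth Nat.Prime (fA T.1 m) else 1) (n + 1)).symm
      rw [hrep]
      exact (continuous_of_discreteTopology).comp
        (continuous_pi fun m => ((ih m.1 m.2).prodMk
          ((continuous_apply (m.1, n + 1)).comp continuous_subtype_val)))

end RH

open Classical in
/-- There is a continuous map assigning to each graph `T ∈ X_Gr` an injective map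
`f_T : ℕ → ℕ \\ {0, 1}` which is an isomorphism between `T` and the induced subgraph of
`R_ω` on the range of `f_T`; in particular, the map sending `T` to (the characteristic
function of) the range of `f_T` is continuous. -/
theorem continuous_embedding_into_Romega :
    ∃ F : XGr → ℕ → ℕ, Continuous F ∧
      (∀ T : XGr, Function.Injective (F T) ∧ (∀ n, 2 ≤ F T n) ∧
        ∀ m n, T.1 (m, n) = true ↔ RomegaAdj (F T m) (F T n)) ∧
      Continuous fun T : XGr => fun v : ℕ => decide (v ∈ Set.range (F T)) := by
  refine ⟨fun T => RH.fA T.1, continuous_pi RH.cont_fA, fun T =>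
    ⟨(RH.fA_strictMono T.1).injective, RH.two_le_fA T.1, RH.main_iff T⟩, ?_⟩
  apply continuous_pi
  intro v
  have hrep : (fun T : XGr => decide (v ∈ Set.range (RH.fA T.1))) =
      (fun w : Fin (v + 1) → ℕ => decide (∃ n : Fin (v + 1), w n = v)) ∘
      (fun T : XGr => fun m : Fin (v + 1) => RH.fA T.1 m.1) := by
    funext T
    simp only [Function.comp]
    apply decide_eq_decide.mpr
    constructor
    · rintro ⟨n, rfl⟩
      have := RH.fA_ge T.1 n
      exact ⟨⟨n, by omega⟩, rfl⟩
    · rintro ⟨n, hn⟩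
      exact ⟨n.1, hn⟩
  rw [hrep]
  exact continuous_of_discreteTopology.comp (continuous_pi fun m => RH.cont_fA m.1)
end
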